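/- Let Γ be a group and let F be a finite normal subgroup of Γ. Then the quotient Γ/F is a Schreier group if and only if Γ is a Schreier group. -/

import Mathlib

/-- A group is a Schreier group if every finitely generated normal subgroup is
either finite or of finite index. -/
def IsSchreierGroup (G : Type*) [Group G] : Prop :=
  ∀ N : Subgroup G, N.Normal → N.FG → (Finite N ∨ N.FiniteIndex)

/-- The image of a finitely generated subgroup is finitely generated. -/
theorem subgroup_fg_map {G H : Type*} [Group G] [Group H] (f : G →* H) {N : Subgroup G}
    (h : N.FG) : (N.map f).FG := by
  obtain ⟨S, hS, hfin⟩ := (Subgroup.fg_iff N).mp h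
  exact (Subgroup.fg_iff _).mpr ⟨f '' S, by rw [← MonoidHom.map_closure, hS], hfin.image _⟩

/-- The preimage in `Γ` of a finitely generated subgroup of `Γ ⧸ F`, for `F` finite,
is finitely generated. -/
theorem comap_mk_fg {Γ : Type*} [Group Γ] (F : Subgroup Γ) [F.Normal] (h : Finite F)
    (N' : Subgroup (Γ ⧸ F)) (hfg : N'.FG) : (N'.comap (QuotientGroup.mk' F)).FG := by
  obtain ⟨S', hS', hSfin⟩ := (Subgroup.fg_iff N').mp hfg
  have hsurj : Function.Surjective (QuotientGroup.mk' F) := QuotientGroup.mk'_surjective F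
  set S : Set Γ := (fun x => Classical.choose (hsurj x)) '' S' with hSdef
  have hSim : (QuotientGroup.mk' F) '' S = S' := by
    rw [hSdef, Set.image_image]
    have : (fun x => (QuotientGroup.mk' F) (Classical.choose (hsurj x))) = fun x => x :=
      funext fun x => Classical.choose_spec (hsurj x)
    rw [this]; exact Set.image_id S'
  have hSfin2 : S.Finite := hSfin.image _
  have key : Subgroup.closure (S ∪ (F : Set Γ)) = N'.comap (QuotientGroup.mk' F) := by
    have hFle : F ≤ Subgroup.closure (S ∪ (F : Set Γ)) := fun x hx =>
      Subgroup.subset_closure (Set.mem_union_right _ hx)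
    have hmap : (Subgroup.closure (S ∪ (F : Set Γ))).map (QuotientGroup.mk' F) = N' := by
      rw [MonoidHom.map_closure, Set.image_union, hSim, ← hS', Subgroup.closure_union]
      have h1 : Subgroup.closure ((QuotientGroup.mk' F) '' (F : Set Γ)) ≤ ⊥ := by
        rw [Subgroup.closure_le]
        rintro _ ⟨x, hx, rfl⟩
        simp only [Subgroup.coe_bot, Set.mem_singleton_iff, QuotientGroup.mk'_apply]
        exact (QuotientGroup.eq_one_iff x).mpr hx
      rw [sup_eq_left.mpr (h1.trans bot_le)]
    calc Subgroup.closure (S ∪ (F : Set Γ))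
        = ((Subgroup.closure (S ∪ (F : Set Γ))).map (QuotientGroup.mk' F)).comap
            (QuotientGroup.mk' F) := by
          rw [Subgroup.comap_map_eq, QuotientGroup.ker_mk', sup_eq_left.mpr hFle]
      _ = N'.comap (QuotientGroup.mk' F) := by rw [hmap]
  rw [← key, Subgroup.fg_iff]
  exact ⟨S ∪ (F : Set Γ), rfl, hSfin2.union (Set.toFinite _)⟩

theorem stmt_4 (Γ : Type*) [Group Γ] (F : Subgroup Γ) [F.Normal] (h : Finite F) :
    IsSchreierGroup (Γ ⧸ F) ↔ IsSchreierGroup Γ := by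
  have hsurj : Function.Surjective (QuotientGroup.mk' F) := QuotientGroup.mk'_surjective F
  constructor
  · -- Γ/F Schreier → Γ Schreier
    intro hq N hN hNfg
    have hN' : (N.map (QuotientGroup.mk' F)).Normal := Subgroup.Normal.map hN _ hsurj
    rcases hq (N.map (QuotientGroup.mk' F)) hN' (subgroup_fg_map _ hNfg) with hfin | hind
    · -- map finite ⇒ N finite
      left
      set φ : N →* Γ ⧸ F := (QuotientGroup.mk' F).comp N.subtype with hφ
      have hker : Finite φ.ker := by
        refine Finite.of_injective (fun x => (⟨(x : N), ?_⟩ : F)) ?_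
        · have := x.2
          simp only [hφ, MonoidHom.mem_ker, MonoidHom.comp_apply, Subgroup.coe_subtype,
            QuotientGroup.mk'_apply] at this
          exact (QuotientGroup.eq_one_iff _).mp this
        · intro a b hab
          ext
          simpa using congrArg Subtype.val hab
      have hr : φ.range = N.map (QuotientGroup.mk' F) := by
        ext x
        simp [hφ, MonoidHom.mem_range, Subgroup.mem_map, Subtype.exists]
      have hrange : Finite φ.range := by rw [hr]; exact hfin
      have hquot : Finite (N ⧸ φ.ker) :=
        Finite.of_equiv _ (QuotientGroup.quotientKerEquivRange φ).toEquiv.symm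
      exact Finite.of_subgroup_quotient φ.ker
    · -- map finite index ⇒ N finite index
      right
      constructor
      have h1 : (N ⊔ F).index ≠ 0 := by
        have := Subgroup.index_map N (QuotientGroup.mk' F)
        rw [QuotientGroup.ker_mk', MonoidHom.range_eq_top.mpr hsurj, Subgroup.index_top,
          mul_one] at this
        rw [← this]
        exact hind.index_ne_zero
      have h2 : N.relIndex (N ⊔ F) ≠ 0 := by
        rw [sup_comm, Subgroup.relIndex_sup_right]
        have : Finite (F ⧸ N.subgroupOf F) := Quotient.finite _
        exact Subgroup.index_ne_zero_of_finite (H := N.subgroupOf F)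
      have key := Subgroup.relIndex_mul_index (le_sup_left : N ≤ N ⊔ F)
      rw [← key]
      exact Nat.mul_ne_zero h2 h1
  · -- Γ Schreier → Γ/F Schreier
    intro hg N' hN' hfg
    have hNfg := comap_mk_fg F h N' hfg
    have hNnorm : (N'.comap (QuotientGroup.mk' F)).Normal := Subgroup.Normal.comap hN' _
    rcases hg _ hNnorm hNfg with hfin | hind
    · left
      have heq : N' = (N'.comap (QuotientGroup.mk' F)).map (QuotientGroup.mk' F) :=
        (Subgroup.map_comap_eq_self_of_surjective hsurj N').symm
      rw [heq]
      have : ((N'.comap (QuotientGroup.mk' F)) : Set Γ).Finite := Set.toFinite _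
      exact Set.Finite.to_subtype (this.image _)
    · right
      constructor
      rw [← Subgroup.index_comap_of_surjective N' hsurj]
      exact hind.index_ne_zero
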